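/- For the specific curve r(λ) = (sin(λ/2), sin(λ)cos²(λ), sin(λ)) on [0, 4π], the curve is closed (r(4π) = r(0) = 0), and the swept area of its derivative vanishes: ∫₀^{4π} r'(λ) × r''(λ) dλ = 0. -/

import Mathlib

open intervalIntegral Set Real

/-- Cross product in ℝ³. -/
def cross3 (v w : Fin 3 → ℝ) : Fin 3 → ℝ :=
  ![v 1 * w 2 - v 2 * w 1, v 2 * w 0 - v 0 * w 2, v 0 * w 1 - v 1 * w 0]

/-- the parity curve `r(λ) = (sin(λ/2), sin λ cos²λ, sin λ)` on
`[0, 4π]` is closed with `r(4π) = r(0) = 0`, and the swept area of its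
derivative vanishes. -/
theorem stmt_5 (r : ℝ → (Fin 3 → ℝ))
    (hr : ∀ l : ℝ, r l = ![Real.sin (l/2), Real.sin l * (Real.cos l)^2, Real.sin l]) :
    r (4*π) = r 0 ∧ r 0 = 0 ∧
      ∫ l in (0:ℝ)..(4*π), cross3 (deriv r l) (deriv (deriv r) l) = 0 := by
  have hre : r = fun l => ![Real.sin (l/2), Real.sin l * (Real.cos l)^2, Real.sin l] :=
    funext hr
  have hsin4 : Real.sin (4*π) = 0 := by
    have := Real.sin_int_mul_pi 4
    push_cast at this
    linarith [this]
  have hsin2 : Real.sin (4*π/2) = 0 := by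
    have h : (4:ℝ)*π/2 = 2*π := by ring
    rw [h, Real.sin_two_pi]
  have hcos4pi : Real.cos (4*π) = 1 := by
    have := Real.cos_int_mul_two_pi 2
    push_cast at this
    have h : (4:ℝ)*π = 2*(2*π) := by ring
    rw [h]; exact this
  have hcos2pi2 : Real.cos (4*π/2) = 1 := by
    have h : (4:ℝ)*π/2 = 2*π := by ring
    rw [h, Real.cos_two_pi]
  -- first derivative
  set v1 : ℝ → Fin 3 → ℝ := fun l =>
    ![Real.cos (l/2) * (1/2),
      Real.cos l ^ 3 - 2 * Real.sin l ^ 2 * Real.cos l,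
      Real.cos l] with hv1
  have hd1 : ∀ l, HasDerivAt r (v1 l) l := by
    intro l
    rw [hre]
    apply hasDerivAt_pi.2
    intro i
    fin_cases i
    · show HasDerivAt (fun x : ℝ => Real.sin (x/2)) (Real.cos (l/2) * (1/2)) l
      exact ((hasDerivAt_id l).div_const 2).sin
    · show HasDerivAt (fun x : ℝ => Real.sin x * Real.cos x ^ 2)
        (Real.cos l ^ 3 - 2 * Real.sin l ^ 2 * Real.cos l) l
      have h := (Real.hasDerivAt_sin l).mul ((Real.hasDerivAt_cos l).fun_pow 2)
      refine h.congr_deriv ?_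
      push_cast
      ring
    · show HasDerivAt (fun x : ℝ => Real.sin x) (Real.cos l) l
      exact Real.hasDerivAt_sin l
  have hder1 : deriv r = v1 := funext fun l => (hd1 l).deriv
  -- second derivative
  set v2 : ℝ → Fin 3 → ℝ := fun l =>
    ![-Real.sin (l/2) * (1/2) * (1/2),
      -7 * Real.sin l * Real.cos l ^ 2 + 2 * Real.sin l ^ 3,
      -Real.sin l] with hv2
  have hd2 : ∀ l, HasDerivAt (deriv r) (v2 l) l := by
    intro l
    rw [hder1, hv1]
    apply hasDerivAt_pi.2
    intro i
    fin_cases i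
    · show HasDerivAt (fun x : ℝ => Real.cos (x/2) * (1/2))
        (-Real.sin (l/2) * (1/2) * (1/2)) l
      exact (((hasDerivAt_id l).div_const 2).cos).mul_const (1/2)
    · show HasDerivAt (fun x : ℝ => Real.cos x ^ 3 - 2 * Real.sin x ^ 2 * Real.cos x)
        (-7 * Real.sin l * Real.cos l ^ 2 + 2 * Real.sin l ^ 3) l
      have h := (((Real.hasDerivAt_cos l).fun_pow 3).fun_sub
        ((((Real.hasDerivAt_sin l).fun_pow 2).fun_mul (Real.hasDerivAt_cos l)).const_mul 2))
      convert h using 1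
      · funext x; ring
      · push_cast; ring
    · show HasDerivAt (fun x : ℝ => Real.cos x) (-Real.sin l) l
      exact Real.hasDerivAt_cos l
  have hder2 : deriv (deriv r) = v2 := funext fun l => (hd2 l).deriv
  refine ⟨?_, ?_, ?_⟩
  · rw [hr, hr]
    norm_num [hsin4, hsin2]
  · rw [hr]
    funext i
    fin_cases i
    · show Real.sin ((0:ℝ)/2) = 0; norm_num
    · show Real.sin 0 * Real.cos 0 ^ 2 = 0; norm_num
    · show Real.sin 0 = 0; norm_num
  · -- the integral
    have hint : (∫ l in (0:ℝ)..(4*π), cross3 (deriv r l) (deriv (deriv r) l))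
        = ∫ l in (0:ℝ)..(4*π), cross3 (v1 l) (v2 l) := by
      rw [hder2, hder1]
    rw [hint]
    -- explicit antiderivative
    set F : ℝ → Fin 3 → ℝ := fun l =>
      ![-3/2 * Real.cos l ^ 4,
        -(Real.cos (l/2)) / 2 - Real.cos (l/2) ^ 3 / 3,
        60/7 * Real.cos (l/2) ^ 7 - 54/5 * Real.cos (l/2) ^ 5
          + 7/3 * Real.cos (l/2) ^ 3 + 1/2 * Real.cos (l/2)] with hF
    have hderF : ∀ l, HasDerivAt F (cross3 (v1 l) (v2 l)) l := by
      intro l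
      have hcl2 : HasDerivAt (fun x : ℝ => Real.cos (x/2)) (-Real.sin (l/2) * (1/2)) l :=
        ((hasDerivAt_id l).div_const 2).cos
      have hpyth : Real.sin (l/2) ^ 2 + Real.cos (l/2) ^ 2 = 1 :=
        Real.sin_sq_add_cos_sq (l/2)
      have h2 : (2:ℝ) * (l/2) = l := by ring
      have hs : Real.sin l = 2 * Real.sin (l/2) * Real.cos (l/2) := by
        have := Real.sin_two_mul (l/2); rw [h2] at this; linarith
      have hc : Real.cos l = 2 * Real.cos (l/2) ^ 2 - 1 := by
        have := Real.cos_two_mul (l/2); rw [h2] at this; linarith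
      apply hasDerivAt_pi.2
      intro i
      fin_cases i
      · show HasDerivAt (fun x : ℝ => -3/2 * Real.cos x ^ 4)
          ((Real.cos l ^ 3 - 2 * Real.sin l ^ 2 * Real.cos l) * (-Real.sin l)
            - Real.cos l * (-7 * Real.sin l * Real.cos l ^ 2 + 2 * Real.sin l ^ 3)) l
        have h := ((Real.hasDerivAt_cos l).fun_pow 4).const_mul (-3/2 : ℝ)
        refine h.congr_deriv ?_
        push_cast
        ring
      · show HasDerivAt (fun x : ℝ => -(Real.cos (x/2)) / 2 - Real.cos (x/2) ^ 3 / 3)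
          (Real.cos l * (-Real.sin (l/2) * (1/2) * (1/2))
            - Real.cos (l/2) * (1/2) * (-Real.sin l)) l
        have h := ((hcl2.fun_neg).div_const 2).fun_sub ((hcl2.fun_pow 3).div_const 3)
        refine h.congr_deriv ?_
        rw [hs, hc]
        push_cast
        ring
      · show HasDerivAt (fun x : ℝ => 60/7 * Real.cos (x/2) ^ 7 - 54/5 * Real.cos (x/2) ^ 5
            + 7/3 * Real.cos (x/2) ^ 3 + 1/2 * Real.cos (x/2))
          (Real.cos (l/2) * (1/2) * (-7 * Real.sin l * Real.cos l ^ 2 + 2 * Real.sin l ^ 3)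
            - (Real.cos l ^ 3 - 2 * Real.sin l ^ 2 * Real.cos l)
              * (-Real.sin (l/2) * (1/2) * (1/2))) l
        have h := ((((hcl2.fun_pow 7).const_mul (60/7 : ℝ)).fun_sub
          ((hcl2.fun_pow 5).const_mul (54/5 : ℝ))).fun_add
          ((hcl2.fun_pow 3).const_mul (7/3 : ℝ))).fun_add (hcl2.const_mul (1/2 : ℝ))
        convert h using 1
        rw [hs, hc]
        push_cast
        linear_combination (4 * Real.sin (l/2) * Real.cos (l/2) ^ 4
          + 2 * Real.sin (l/2) * Real.cos (l/2) ^ 2) * hpyth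
    have hcont : Continuous fun l => cross3 (v1 l) (v2 l) := by
      apply continuous_pi
      intro i
      fin_cases i
      · show Continuous fun l : ℝ =>
          (Real.cos l ^ 3 - 2 * Real.sin l ^ 2 * Real.cos l) * (-Real.sin l)
            - Real.cos l * (-7 * Real.sin l * Real.cos l ^ 2 + 2 * Real.sin l ^ 3)
        fun_prop
      · show Continuous fun l : ℝ =>
          Real.cos l * (-Real.sin (l/2) * (1/2) * (1/2))
            - Real.cos (l/2) * (1/2) * (-Real.sin l)
        fun_prop
      · show Continuous fun l : ℝ =>
          Real.cos (l/2) * (1/2) * (-7 * Real.sin l * Real.cos l ^ 2 + 2 * Real.sin l ^ 3)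
            - (Real.cos l ^ 3 - 2 * Real.sin l ^ 2 * Real.cos l)
              * (-Real.sin (l/2) * (1/2) * (1/2))
        fun_prop
    rw [intervalIntegral.integral_eq_sub_of_hasDerivAt
      (fun x _ => hderF x) (hcont.intervalIntegrable 0 (4*π))]
    have hFeq : F (4*π) = F 0 := by
      funext i
      fin_cases i
      · show -3/2 * Real.cos (4*π) ^ 4 = -3/2 * Real.cos 0 ^ 4
        rw [hcos4pi, Real.cos_zero]
      · show -(Real.cos (4*π/2)) / 2 - Real.cos (4*π/2) ^ 3 / 3
          = -(Real.cos ((0:ℝ)/2)) / 2 - Real.cos ((0:ℝ)/2) ^ 3 / 3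
        rw [hcos2pi2]; norm_num
      · show 60/7 * Real.cos (4*π/2) ^ 7 - 54/5 * Real.cos (4*π/2) ^ 5
            + 7/3 * Real.cos (4*π/2) ^ 3 + 1/2 * Real.cos (4*π/2)
          = 60/7 * Real.cos ((0:ℝ)/2) ^ 7 - 54/5 * Real.cos ((0:ℝ)/2) ^ 5
            + 7/3 * Real.cos ((0:ℝ)/2) ^ 3 + 1/2 * Real.cos ((0:ℝ)/2)
        rw [hcos2pi2]; norm_num
    rw [hFeq, sub_self]
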